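/- If X and Y are uniformly discrete non-amenable spaces of bounded geometry and f : X → Y is a quasi-isometry, then there is a bijection (hence bilipschitz equivalence) between X and Y at bounded distance from f. -/

import Mathlib

open scoped ENNReal

/-- The closed `r`-neighborhood of a set `A`. -/
def nbhd {Z : Type*} [MetricSpace Z] (r : ℝ) (A : Set Z) : Set Z :=
  {z | ∃ a ∈ A, dist z a ≤ r}

/-- The `r`-boundary of `A`: points outside `A` within distance `r` of `A`. -/
def bdry {Z : Type*} [MetricSpace Z] (r : ℝ) (A : Set Z) : Set Z :=
  nbhd r A \ A

/-- Uniformly discrete metric space. -/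
def UniformlyDiscrete (Z : Type*) [MetricSpace Z] : Prop :=
  ∃ r > (0 : ℝ), ∀ x y : Z, dist x y < r → x = y

/-- Bounded geometry: balls of radius `r` have at most `N_r` points. -/
def BoundedGeometry (Z : Type*) [MetricSpace Z] : Prop :=
  ∀ r : ℝ, ∃ N : ℕ, ∀ x : Z, {y : Z | dist y x ≤ r}.Finite ∧
    {y : Z | dist y x ≤ r}.ncard ≤ N

/-- Coarse Lipschitz map. -/
def CoarseLipschitz {X Y : Type*} [MetricSpace X] [MetricSpace Y] (f : X → Y) : Prop :=
  ∃ K L : ℝ, ∀ x₁ x₂ : X, dist (f x₁) (f x₂) ≤ K * dist x₁ x₂ + L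

/-- Schröder–Bernstein with control: the bijection agrees with `φ` or with `ψ⁻¹`. -/
theorem csb_ctrl {α β : Type*} (φ : α → β) (ψ : β → α)
    (hφ : Function.Injective φ) (hψ : Function.Injective ψ) :
    ∃ h : α → β, Function.Bijective h ∧ ∀ a, h a = φ a ∨ ψ (h a) = a := by
  classical
  set F : Set α →o Set α :=
    ⟨fun A => (ψ '' (φ '' A)ᶜ)ᶜ, fun A B hAB =>
      Set.compl_subset_compl.2
        (Set.image_mono (Set.compl_subset_compl.2 (Set.image_mono hAB)))⟩ with hF
  set S : Set α := F.lfp with hSdef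
  have hS : (ψ '' (φ '' S)ᶜ)ᶜ = S := OrderHom.map_lfp F
  have hmem : ∀ a, a ∉ S → ∃ y, y ∉ φ '' S ∧ ψ y = a := by
    intro a ha
    rw [← hS] at ha
    exact Set.notMem_compl_iff.mp ha
  let h : α → β := fun a => if haS : a ∈ S then φ a else Classical.choose (hmem a haS)
  have hout : ∀ a (haS : a ∉ S),
      h a ∉ φ '' S ∧ ψ (h a) = a := by
    intro a haS
    have := Classical.choose_spec (hmem a haS)
    simpa [h, haS] using this
  have hin : ∀ a, a ∈ S → h a = φ a := by
    intro a haS; simp [h, haS]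
  refine ⟨h, ⟨?_, ?_⟩, ?_⟩
  · intro a b hab
    by_cases haS : a ∈ S <;> by_cases hbS : b ∈ S
    · rw [hin a haS, hin b hbS] at hab; exact hφ hab
    · exfalso
      rw [hin a haS] at hab
      exact (hout b hbS).1 (hab ▸ Set.mem_image_of_mem φ haS)
    · exfalso
      rw [hin b hbS] at hab
      exact (hout a haS).1 (hab ▸ Set.mem_image_of_mem φ hbS)
    · have := (hout a haS).2
      rw [hab, (hout b hbS).2] at this
      exact this.symm
  · intro y
    by_cases hy : y ∈ φ '' S
    · obtain ⟨a, haS, rfl⟩ := hy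
      exact ⟨a, hin a haS⟩
    · have haS : ψ y ∉ S := by
        intro h'
        rw [← hS] at h'
        exact h' ⟨y, hy, rfl⟩
      refine ⟨ψ y, hψ ?_⟩
      rw [(hout (ψ y) haS).2]
  · intro a
    by_cases haS : a ∈ S
    · exact Or.inl (hin a haS)
    · exact Or.inr (hout a haS).2

/-- Hall-type lemma: a coarse Lipschitz map with a coarse inverse between
bounded-geometry spaces, with nonamenable source, admits a close injection. -/
theorem exists_close_injection {X Y : Type*} [MetricSpace X] [MetricSpace Y]
    (hbgX : BoundedGeometry X) (hbgY : BoundedGeometry Y)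
    (hnaX : ∀ C > (0 : ℝ), ∃ r > (0 : ℝ), ∀ S : Set X, S.Finite →
      (S.ncard : ℝ) ≤ C * ((bdry r S).ncard : ℝ))
    (f : X → Y) (g : Y → X) (hf : CoarseLipschitz f)
    (hgf : ∃ C : ℝ, ∀ x : X, dist (g (f x)) x ≤ C) :
    ∃ φ : X → Y, Function.Injective φ ∧ ∃ R : ℝ, 0 ≤ R ∧ ∀ x, dist (φ x) (f x) ≤ R := by
  classical
  obtain ⟨K₀, L₀, hKL₀⟩ := hf
  obtain ⟨C₀, hC₀⟩ := hgf
  set K : ℝ := max K₀ 0 with hK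
  set L : ℝ := max L₀ 0 with hL
  have hK0 : 0 ≤ K := le_max_right _ _
  have hL0 : 0 ≤ L := le_max_right _ _
  have hKL : ∀ x₁ x₂ : X, dist (f x₁) (f x₂) ≤ K * dist x₁ x₂ + L := by
    intro x₁ x₂
    calc dist (f x₁) (f x₂) ≤ K₀ * dist x₁ x₂ + L₀ := hKL₀ x₁ x₂
      _ ≤ K * dist x₁ x₂ + L := by
        have h1 : K₀ * dist x₁ x₂ ≤ K * dist x₁ x₂ :=
          mul_le_mul_of_nonneg_right (le_max_left _ _) dist_nonneg
        have h2 : L₀ ≤ L := le_max_left _ _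
        linarith
  set D : ℝ := max C₀ 0 with hD
  have hD0 : 0 ≤ D := le_max_right _ _
  have hfib : ∀ x₁ x₂ : X, f x₁ = f x₂ → dist x₁ x₂ ≤ 2 * D := by
    intro x₁ x₂ hx
    calc dist x₁ x₂ ≤ dist x₁ (g (f x₁)) + dist (g (f x₂)) x₂ := by
          rw [hx]; exact dist_triangle _ _ _
      _ ≤ C₀ + C₀ := by
          refine add_le_add ?_ (hC₀ x₂)
          rw [dist_comm]; exact hC₀ x₁
      _ ≤ 2 * D := by simp [hD]; nlinarith [le_max_left C₀ (0:ℝ)]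
  obtain ⟨N, hN⟩ := hbgX (2 * D)
  set M : ℕ := N + 1 with hM
  have hMpos : (0:ℝ) < M := by positivity
  obtain ⟨r, hr, hna⟩ := hnaX (1 / M) (by positivity)
  set R : ℝ := K * r + L with hR
  have hR0 : 0 ≤ R := by positivity
  obtain ⟨NY, hNY⟩ := hbgY R
  set t : X → Finset Y := fun x => (hNY (f x)).1.toFinset with ht
  have htmem : ∀ x y, y ∈ t x ↔ dist y (f x) ≤ R := by
    intro x y; simp [ht, Set.Finite.mem_toFinset]
  have hall : ∀ s : Finset X, s.card ≤ (s.biUnion t).card := by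
    intro s
    set A : Set X := nbhd r ↑s with hA
    have hSA : (s : Set X) ⊆ A := by
      intro x hx
      exact ⟨x, hx, by simp [le_of_lt hr]⟩
    obtain ⟨N₂, hN₂⟩ := hbgX r
    have hAfin : A.Finite := by
      have : A = ⋃ a ∈ (s : Set X), {z : X | dist z a ≤ r} := by
        ext z; simp [hA, nbhd]
      rw [this]
      exact Set.Finite.biUnion s.finite_toSet (fun a _ => (hN₂ a).1)
    -- boundary bound
    have h1 : (M : ℝ) * s.card ≤ ((bdry r (s : Set X)).ncard : ℝ) := by
      have := hna (s : Set X) s.finite_toSet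
      rw [Set.ncard_coe_finset] at this
      rw [div_mul_eq_mul_div, le_div_iff₀ hMpos] at this
      nlinarith
    have h2 : (A.ncard : ℝ) = ((bdry r (s : Set X)).ncard : ℝ) + s.card := by
      have := Set.ncard_diff_add_ncard_of_subset hSA hAfin
      have hb : bdry r (s : Set X) = A \ (s : Set X) := rfl
      rw [hb, ← Set.ncard_coe_finset s]
      exact_mod_cast this.symm
    -- image bound
    have h3 : (A.ncard : ℝ) ≤ (M : ℝ) * ((f '' A).ncard : ℝ) := by
      have himg : f '' A = ↑(hAfin.toFinset.image f) := by
        simp [Set.Finite.coe_toFinset]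
      have hcard : A.ncard = hAfin.toFinset.card := by
        rw [← Set.ncard_coe_finset, Set.Finite.coe_toFinset]
      rw [himg, Set.ncard_coe_finset, hcard]
      have := Finset.card_le_mul_card_image (f := f) hAfin.toFinset M ?_
      · exact_mod_cast this
      · intro b hb
        obtain ⟨x₀, hx₀A, hx₀b⟩ := Finset.mem_image.mp hb
        have hsub : ↑(hAfin.toFinset.filter (fun a => f a = b)) ⊆ {z : X | dist z x₀ ≤ 2 * D} := by
          intro z hz
          simp only [Finset.coe_filter, Set.mem_setOf_eq] at hz
          exact hfib z x₀ (hz.2.trans hx₀b.symm)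
        calc (hAfin.toFinset.filter (fun a => f a = b)).card
            = (↑(hAfin.toFinset.filter (fun a => f a = b)) : Set X).ncard := by
              rw [Set.ncard_coe_finset]
          _ ≤ ({z : X | dist z x₀ ≤ 2 * D}).ncard :=
              Set.ncard_le_ncard hsub (hN x₀).1
          _ ≤ N := (hN x₀).2
          _ ≤ M := by simp [hM]
    -- image lands in biUnion
    have h4 : f '' A ⊆ ↑(s.biUnion t) := by
      rintro y ⟨x', hx', rfl⟩
      obtain ⟨a, has, hda⟩ := hx'
      have : dist (f x') (f a) ≤ R := by
        calc dist (f x') (f a) ≤ K * dist x' a + L := hKL x' a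
          _ ≤ K * r + L := by gcongr
      refine Finset.mem_coe.mpr (Finset.mem_biUnion.mpr ⟨a, has, ?_⟩)
      exact (htmem a (f x')).mpr this
    have h5 : ((f '' A).ncard : ℝ) ≤ ((s.biUnion t).card : ℝ) := by
      have := Set.ncard_le_ncard h4 (s.biUnion t).finite_toSet
      rw [Set.ncard_coe_finset] at this
      exact_mod_cast this
    have : (s.card : ℝ) ≤ ((s.biUnion t).card : ℝ) := by
      have key : (M : ℝ) * s.card ≤ (M : ℝ) * (s.biUnion t).card := by nlinarith
      exact le_of_mul_le_mul_left key hMpos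
    exact_mod_cast this
  obtain ⟨φ, hφinj, hφmem⟩ := (Finset.all_card_le_biUnion_card_iff_exists_injective t).mp hall
  exact ⟨φ, hφinj, R, hR0, fun x => (htmem x (φ x)).mp (hφmem x)⟩

/-- If `X` and `Y` are uniformly discrete, non-amenable, bounded-geometry spaces
and `f` is a quasi-isometry, then there is a bijection at bounded distance from
`f` (hence a bilipschitz equivalence).  Non-amenability is taken in the
isoperimetric form: for every `C > 0` there is `r` with `|S| ≤ C·|∂_r S|`. -/
theorem stmt9 {X Y : Type*} [MetricSpace X] [MetricSpace Y]
    (hudX : UniformlyDiscrete X) (hbgX : BoundedGeometry X)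
    (hudY : UniformlyDiscrete Y) (hbgY : BoundedGeometry Y)
    (hnaX : ∀ C > (0 : ℝ), ∃ r > (0 : ℝ), ∀ S : Set X, S.Finite →
      (S.ncard : ℝ) ≤ C * ((bdry r S).ncard : ℝ))
    (hnaY : ∀ C > (0 : ℝ), ∃ r > (0 : ℝ), ∀ S : Set Y, S.Finite →
      (S.ncard : ℝ) ≤ C * ((bdry r S).ncard : ℝ))
    (f : X → Y) (g : Y → X) (hf : CoarseLipschitz f) (hg : CoarseLipschitz g)
    (hgf : ∃ C : ℝ, ∀ x : X, dist (g (f x)) x ≤ C)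
    (hfg : ∃ C : ℝ, ∀ y : Y, dist (f (g y)) y ≤ C) :
    ∃ h : X → Y, Function.Bijective h ∧ (∃ C : ℝ, ∀ x, dist (h x) (f x) ≤ C) ∧
      ∃ K : ℝ, 1 ≤ K ∧ ∀ x₁ x₂ : X,
        dist x₁ x₂ ≤ K * dist (h x₁) (h x₂) ∧ dist (h x₁) (h x₂) ≤ K * dist x₁ x₂ := by
  classical
  obtain ⟨φ, hφinj, Rf, hRf0, hφ⟩ := exists_close_injection hbgX hbgY hnaX f g hf hgf
  obtain ⟨ψ, hψinj, Rg, hRg0, hψ⟩ := exists_close_injection hbgY hbgX hnaY g f hg hfg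
  obtain ⟨h, hbij, hctrl⟩ := csb_ctrl φ ψ hφinj hψinj
  -- normalized coarse Lipschitz constants
  obtain ⟨K₁₀, L₁₀, hf'⟩ := hf
  obtain ⟨K₂₀, L₂₀, hg'⟩ := hg
  obtain ⟨C₀₀, hgf'⟩ := hgf
  obtain ⟨C₁₀, hfg'⟩ := hfg
  set K₁ : ℝ := max K₁₀ 0
  set L₁ : ℝ := max L₁₀ 0
  set K₂ : ℝ := max K₂₀ 0
  set L₂ : ℝ := max L₂₀ 0
  set C₀ : ℝ := max C₀₀ 0
  set C₁ : ℝ := max C₁₀ 0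
  have hK₁0 : 0 ≤ K₁ := le_max_right _ _
  have hL₁0 : 0 ≤ L₁ := le_max_right _ _
  have hK₂0 : 0 ≤ K₂ := le_max_right _ _
  have hL₂0 : 0 ≤ L₂ := le_max_right _ _
  have hC₀0 : 0 ≤ C₀ := le_max_right _ _
  have hC₁0 : 0 ≤ C₁ := le_max_right _ _
  have hfL : ∀ x₁ x₂ : X, dist (f x₁) (f x₂) ≤ K₁ * dist x₁ x₂ + L₁ := by
    intro x₁ x₂
    calc dist (f x₁) (f x₂) ≤ K₁₀ * dist x₁ x₂ + L₁₀ := hf' x₁ x₂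
      _ ≤ K₁ * dist x₁ x₂ + L₁ := by
        have h1 : K₁₀ * dist x₁ x₂ ≤ K₁ * dist x₁ x₂ :=
          mul_le_mul_of_nonneg_right (le_max_left _ _) dist_nonneg
        have h2 : L₁₀ ≤ L₁ := le_max_left _ _
        linarith
  have hgL : ∀ y₁ y₂ : Y, dist (g y₁) (g y₂) ≤ K₂ * dist y₁ y₂ + L₂ := by
    intro y₁ y₂
    calc dist (g y₁) (g y₂) ≤ K₂₀ * dist y₁ y₂ + L₂₀ := hg' y₁ y₂
      _ ≤ K₂ * dist y₁ y₂ + L₂ := by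
        have h1 : K₂₀ * dist y₁ y₂ ≤ K₂ * dist y₁ y₂ :=
          mul_le_mul_of_nonneg_right (le_max_left _ _) dist_nonneg
        have h2 : L₂₀ ≤ L₂ := le_max_left _ _
        linarith
  have hgfC : ∀ x, dist (g (f x)) x ≤ C₀ := fun x => (hgf' x).trans (le_max_left _ _)
  have hfgC : ∀ y, dist (f (g y)) y ≤ C₁ := fun y => (hfg' y).trans (le_max_left _ _)
  -- h is at bounded distance from f
  set Ch : ℝ := max Rf (C₁ + (K₁ * Rg + L₁)) with hCh
  have hCh0 : 0 ≤ Ch := hRf0.trans (le_max_left _ _)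
  have hhf : ∀ x, dist (h x) (f x) ≤ Ch := by
    intro x
    rcases hctrl x with hc | hc
    · rw [hc]; exact (hφ x).trans (le_max_left _ _)
    · -- ψ (h x) = x, so dist x (g (h x)) ≤ Rg
      have h1 : dist x (g (h x)) ≤ Rg := by
        have heq : dist x (g (h x)) = dist (ψ (h x)) (g (h x)) := by rw [hc]
        rw [heq]; exact hψ (h x)
      have h2 : dist (h x) (f x) ≤ dist (h x) (f (g (h x))) + dist (f (g (h x))) (f x) :=
        dist_triangle _ _ _
      have h3 : dist (h x) (f (g (h x))) ≤ C₁ := by rw [dist_comm]; exact hfgC (h x)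
      have h4 : dist (f (g (h x))) (f x) ≤ K₁ * dist (g (h x)) x + L₁ := hfL _ _
      have h5 : dist (g (h x)) x ≤ Rg := by rw [dist_comm]; exact h1
      have : dist (h x) (f x) ≤ C₁ + (K₁ * Rg + L₁) := by nlinarith
      exact this.trans (le_max_right _ _)
  obtain ⟨δX, hδX, hudX'⟩ := hudX
  obtain ⟨δY, hδY, hudY'⟩ := hudY
  set Kup : ℝ := K₁ + (L₁ + 2 * Ch) / δX with hKup
  set Klo : ℝ := K₂ + (2 * K₂ * Ch + L₂ + 2 * C₀) / δY with hKlo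
  have hKup0 : 0 ≤ Kup := by positivity
  have hKlo0 : 0 ≤ Klo := by positivity
  set Kf : ℝ := 1 + Kup + Klo with hKf
  refine ⟨h, hbij, ⟨Ch, hhf⟩, Kf, by simp only [hKf]; linarith, ?_⟩
  intro x₁ x₂
  by_cases hx : x₁ = x₂
  · subst hx; simp
  constructor
  · -- lower bound : dist x₁ x₂ ≤ Kf * dist (h x₁) (h x₂)
    have hne : h x₁ ≠ h x₂ := fun e => hx (hbij.1 e)
    have hdY : δY ≤ dist (h x₁) (h x₂) := by
      by_contra hlt
      exact hne (hudY' _ _ (lt_of_not_ge hlt))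
    have t1 : dist x₁ x₂ ≤ dist (g (f x₁)) (g (f x₂)) + 2 * C₀ := by
      have := dist_triangle (g (f x₁)) x₁ x₂  -- not directly; do full triangle
      have a1 : dist x₁ x₂ ≤ dist x₁ (g (f x₁)) + dist (g (f x₁)) (g (f x₂))
          + dist (g (f x₂)) x₂ := dist_triangle4 _ _ _ _
      have a2 : dist x₁ (g (f x₁)) ≤ C₀ := by rw [dist_comm]; exact hgfC x₁
      have a3 : dist (g (f x₂)) x₂ ≤ C₀ := hgfC x₂
      nlinarith
    have t2 : dist (g (f x₁)) (g (f x₂)) ≤ K₂ * dist (f x₁) (f x₂) + L₂ := hgL _ _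
    have t3 : dist (f x₁) (f x₂) ≤ dist (h x₁) (h x₂) + 2 * Ch := by
      have a1 : dist (f x₁) (f x₂) ≤ dist (f x₁) (h x₁) + dist (h x₁) (h x₂)
          + dist (h x₂) (f x₂) := dist_triangle4 _ _ _ _
      have a2 : dist (f x₁) (h x₁) ≤ Ch := by rw [dist_comm]; exact hhf x₁
      have a3 : dist (h x₂) (f x₂) ≤ Ch := hhf x₂
      nlinarith
    have key : dist x₁ x₂ ≤ K₂ * dist (h x₁) (h x₂) + (2 * K₂ * Ch + L₂ + 2 * C₀) := by
      nlinarith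
    have habs : (2 * K₂ * Ch + L₂ + 2 * C₀)
        ≤ ((2 * K₂ * Ch + L₂ + 2 * C₀) / δY) * dist (h x₁) (h x₂) := by
      rw [div_mul_eq_mul_div, le_div_iff₀ hδY]
      exact mul_le_mul_of_nonneg_left hdY (by positivity)
    have heq : Klo * dist (h x₁) (h x₂) = K₂ * dist (h x₁) (h x₂)
        + ((2 * K₂ * Ch + L₂ + 2 * C₀) / δY) * dist (h x₁) (h x₂) := by
      rw [hKlo, add_mul]
    have : dist x₁ x₂ ≤ Klo * dist (h x₁) (h x₂) := by
      rw [heq]; linarith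
    calc dist x₁ x₂ ≤ Klo * dist (h x₁) (h x₂) := this
      _ ≤ Kf * dist (h x₁) (h x₂) :=
        mul_le_mul_of_nonneg_right (by simp only [hKf]; linarith) dist_nonneg
  · -- upper bound : dist (h x₁) (h x₂) ≤ Kf * dist x₁ x₂
    have hdX : δX ≤ dist x₁ x₂ := by
      by_contra hlt
      exact hx (hudX' _ _ (lt_of_not_ge hlt))
    have t1 : dist (h x₁) (h x₂) ≤ dist (f x₁) (f x₂) + 2 * Ch := by
      have a1 : dist (h x₁) (h x₂) ≤ dist (h x₁) (f x₁) + dist (f x₁) (f x₂)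
          + dist (f x₂) (h x₂) := dist_triangle4 _ _ _ _
      have a2 := hhf x₁
      have a3 : dist (f x₂) (h x₂) ≤ Ch := by rw [dist_comm]; exact hhf x₂
      nlinarith
    have t2 : dist (f x₁) (f x₂) ≤ K₁ * dist x₁ x₂ + L₁ := hfL _ _
    have habs : (L₁ + 2 * Ch) ≤ ((L₁ + 2 * Ch) / δX) * dist x₁ x₂ := by
      rw [div_mul_eq_mul_div, le_div_iff₀ hδX]
      exact mul_le_mul_of_nonneg_left hdX (by positivity)
    have heq : Kup * dist x₁ x₂ = K₁ * dist x₁ x₂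
        + ((L₁ + 2 * Ch) / δX) * dist x₁ x₂ := by
      rw [hKup, add_mul]
    have : dist (h x₁) (h x₂) ≤ Kup * dist x₁ x₂ := by
      rw [heq]; linarith
    calc dist (h x₁) (h x₂) ≤ Kup * dist x₁ x₂ := this
      _ ≤ Kf * dist x₁ x₂ :=
        mul_le_mul_of_nonneg_right (by simp only [hKf]; linarith) dist_nonneg
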